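/- Let L, λ, η, G, ε, δ, ρ, γ be positive reals with 0 < δ < 1, 0 < ρ < 1, let d ≥ 1, let K ≥ 0 be a real number, and let n, m be natural numbers with 1 ≤ m and 2m ≤ n. Suppose γ > 8L²/(λ n) + ρ^K · 2L²/λ and m ≤ ε (γ − 8L²/(λ n) − ρ^K · 2L²/λ) / (2 L η G √d √(ln(1/δ)) · ρ^K). Then 4L²/(λ(n − m)) + ρ^K ( 2L²/λ + 2 m L η G √d √(ln(1/δ)) / ε ) ≤ γ. -/

import Mathlib

/-- **Deletion Capacity Guarantee** (algebraic content of Theorem B.3): if the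
number `m` of deleted samples is small enough, the excess population-risk bound
of the unlearned model stays below the target level `γ`. -/
theorem deletion_capacity
    (L lam η G ε δ ρ γ : ℝ)
    (hL : 0 < L) (hlam : 0 < lam) (hη : 0 < η) (hG : 0 < G)
    (hε : 0 < ε) (hδ0 : 0 < δ) (hδ1 : δ < 1) (hρ0 : 0 < ρ) (hρ1 : ρ < 1)
    (hγ : 0 < γ)
    (d : ℕ) (hd : 1 ≤ d) (K : ℝ) (hK : 0 ≤ K)
    (n m : ℕ) (hm : 1 ≤ m) (hnm : 2 * m ≤ n)
    (hgap : 8 * L ^ 2 / (lam * n) + ρ ^ K * (2 * L ^ 2 / lam) < γ)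
    (hmle : (m : ℝ) ≤
      ε * (γ - 8 * L ^ 2 / (lam * n) - ρ ^ K * (2 * L ^ 2 / lam)) /
        (2 * L * η * G * Real.sqrt d * Real.sqrt (Real.log (1 / δ)) * ρ ^ K)) :
    4 * L ^ 2 / (lam * ((n : ℝ) - m)) +
      ρ ^ K * (2 * L ^ 2 / lam +
        2 * m * L * η * G * Real.sqrt d * Real.sqrt (Real.log (1 / δ)) / ε) ≤ γ := by
  set s := Real.sqrt d with hs
  set t := Real.sqrt (Real.log (1 / δ)) with ht
  have hs0 : 0 < s := Real.sqrt_pos.mpr (by exact_mod_cast Nat.lt_of_lt_of_le Nat.zero_lt_one hd)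
  have ht0 : 0 < t := Real.sqrt_pos.mpr (Real.log_pos (by rw [one_div]; exact (one_lt_inv₀ hδ0).mpr hδ1))
  have hρK : 0 < ρ ^ K := Real.rpow_pos_of_pos hρ0 K
  have hD : 0 < 2 * L * η * G * s * t * ρ ^ K := by positivity
  have hm1 : (1 : ℝ) ≤ (m : ℝ) := by exact_mod_cast hm
  have hnm' : 2 * (m : ℝ) ≤ (n : ℝ) := by exact_mod_cast hnm
  have hnm0 : 0 < (n : ℝ) - m := by linarith
  have hn0 : 0 < (n : ℝ) := by linarith
  -- first term bound
  have h1 : 4 * L ^ 2 / (lam * ((n : ℝ) - m)) ≤ 8 * L ^ 2 / (lam * n) := by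
    rw [div_le_div_iff₀ (by positivity) (by positivity)]
    nlinarith [mul_nonneg (mul_nonneg hlam.le (sq_nonneg L)) (by linarith : (0:ℝ) ≤ (n:ℝ) - 2 * m)]
  -- third term bound
  have h2 : (m : ℝ) * (2 * L * η * G * s * t * ρ ^ K) ≤
      ε * (γ - 8 * L ^ 2 / (lam * n) - ρ ^ K * (2 * L ^ 2 / lam)) :=
    (le_div_iff₀ hD).mp hmle
  have h3 : ρ ^ K * (2 * m * L * η * G * s * t / ε) ≤
      γ - 8 * L ^ 2 / (lam * n) - ρ ^ K * (2 * L ^ 2 / lam) := by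
    rw [show ρ ^ K * (2 * (m:ℝ) * L * η * G * s * t / ε)
        = ((m:ℝ) * (2 * L * η * G * s * t * ρ ^ K)) / ε from by ring, div_le_iff₀ hε]
    nlinarith [h2]
  have expand : ρ ^ K * (2 * L ^ 2 / lam + 2 * m * L * η * G * s * t / ε)
      = ρ ^ K * (2 * L ^ 2 / lam) + ρ ^ K * (2 * m * L * η * G * s * t / ε) := by ring
  linarith [h1, h3, expand.le, expand.ge]
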